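/- Let n ≥ 1 and A be a real n×n matrix. If A = B + C where B, C are weakly algebraically independent n×n real matrices, then A is transcendental, i.e., P(A) ≠ 0 for every nonzero polynomial P with integer coefficients. -/
import Mathlib


/-- Two real `n × n` matrices are weakly algebraically independent if every
noncommutative integer polynomial relation they satisfy is satisfied by all
pairs of real `n × n` matrices. -/
def WeaklyAlgIndep {n : ℕ} (B C : Matrix (Fin n) (Fin n) ℝ) : Prop :=
  ∀ P : FreeAlgebra ℤ (Fin 2), (FreeAlgebra.lift ℤ ![B, C]) P = 0 →
    ∀ C₀ C₁ : Matrix (Fin n) (Fin n) ℝ, (FreeAlgebra.lift ℤ ![C₀, C₁]) P = 0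

theorem transcendental_of_weaklyAlgIndep_sum (n : ℕ) (hn : 1 ≤ n)
    (A B C : Matrix (Fin n) (Fin n) ℝ) (hsum : A = B + C)
    (hind : WeaklyAlgIndep B C) :
    ∀ P : Polynomial ℤ, P ≠ 0 → Polynomial.aeval A P ≠ 0 := by
  intro P hP h0
  haveI : NeZero n := ⟨by omega⟩
  -- the noncommutative polynomial P(X+Y)
  set Q : FreeAlgebra ℤ (Fin 2) :=
    Polynomial.aeval (FreeAlgebra.ι ℤ (0 : Fin 2) + FreeAlgebra.ι ℤ (1 : Fin 2)) P with hQ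
  have key : ∀ (M N : Matrix (Fin n) (Fin n) ℝ),
      (FreeAlgebra.lift ℤ ![M, N]) Q = Polynomial.aeval (M + N) P := by
    intro M N
    rw [hQ, ← Polynomial.aeval_algHom_apply]
    simp
  have hBC : (FreeAlgebra.lift ℤ ![B, C]) Q = 0 := by
    rw [key, ← hsum, h0]
  have hall := hind Q hBC
  -- plug in scalar matrices
  have hscal : ∀ t : ℝ, algebraMap ℝ (Matrix (Fin n) (Fin n) ℝ) (Polynomial.aeval t P) = 0 := by
    intro t
    have := hall (algebraMap ℝ (Matrix (Fin n) (Fin n) ℝ) t) 0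
    rw [key, add_zero] at this
    have e := Polynomial.aeval_algHom_apply (IsScalarTower.toAlgHom ℤ ℝ (Matrix (Fin n) (Fin n) ℝ)) t P
    exact e.symm.trans this
  have hroot : ∀ t : ℝ, Polynomial.aeval t P = 0 := by
    intro t
    have hinj : Function.Injective (algebraMap ℝ (Matrix (Fin n) (Fin n) ℝ)) := by
      intro a b hab
      have := congrArg (fun M => M ⟨0, by omega⟩ ⟨0, by omega⟩) hab
      simpa [Matrix.algebraMap_eq_diagonal] using this
    have := hscal t
    rw [show (0 : Matrix (Fin n) (Fin n) ℝ) = algebraMap ℝ _ 0 by simp] at this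
    simpa using hinj this
  -- hence the real polynomial map of P is zero
  have hmap : P.map (Int.castRingHom ℝ) = 0 := by
    apply Polynomial.eq_zero_of_infinite_isRoot
    refine Set.infinite_of_injective_forall_mem (f := fun t : ℝ => t) (fun a b h => h) ?_
    intro t
    simp only [Set.mem_setOf_eq, Polynomial.IsRoot, Polynomial.eval_map,
      ← Polynomial.aeval_def]
    exact hroot t
  exact hP (by
    have := Polynomial.map_injective (Int.castRingHom ℝ) Int.cast_injective
    exact this (by simpa using hmap))
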